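/- For every positive real t, the infimum over m ≥ 0 of p² m - c (√(m(m+1)) - m), where c = 4πφ²/p² > 0, is attained at m = g(|p|/((4π)^{1/4} φ^{1/2})) where g(a) = (1/2)((a^4+1)/√(a^4(a^4+2)) - 1); here φ > 0 and p ≠ 0. -/

import Mathlib

set_option maxHeartbeats 1000000

open Real Set

/-- The Bogolubov occupation function. -/
noncomputable def polaronG (a : ℝ) : ℝ :=
  (1 / 2) * ((a ^ 4 + 1) / Real.sqrt (a ^ 4 * (a ^ 4 + 2)) - 1)

/-- For fixed `p ≠ 0` and `φ > 0`, the function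
`F(m) = p² m - (4πφ²/p²)(√(m(m+1)) - m)` on `[0,∞)` has the unique minimizer
`m = g(a)` with `a = |p|/((4π)^{1/4} φ^{1/2})`, and minimum value
`-(4πφ²/p²)·(1/2)(a⁴ + 1 - a²√(a⁴+2))`. -/
theorem stmt_15 (p : EuclideanSpace ℝ (Fin 3)) (hp : p ≠ 0) (φ : ℝ) (hφ : 0 < φ) :
    letI c : ℝ := 4 * Real.pi * φ ^ 2 / ‖p‖ ^ 2
    letI a : ℝ := ‖p‖ / ((4 * Real.pi) ^ ((1 : ℝ) / 4) * φ ^ ((1 : ℝ) / 2))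
    letI F : ℝ → ℝ := fun m => ‖p‖ ^ 2 * m - c * (Real.sqrt (m * (m + 1)) - m)
    0 ≤ polaronG a ∧
    (∀ m : ℝ, 0 ≤ m → F (polaronG a) ≤ F m) ∧
    (∀ m : ℝ, 0 ≤ m → F m = F (polaronG a) → m = polaronG a) ∧
    F (polaronG a) = -c * ((1 / 2) * (a ^ 4 + 1 - a ^ 2 * Real.sqrt (a ^ 4 + 2))) := by
  have hπ : (0:ℝ) < Real.pi := Real.pi_pos
  have hP : (0:ℝ) < ‖p‖ := norm_pos_iff.mpr hp
  set c : ℝ := 4 * Real.pi * φ ^ 2 / ‖p‖ ^ 2 with hcdef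
  set a : ℝ := ‖p‖ / ((4 * Real.pi) ^ ((1 : ℝ) / 4) * φ ^ ((1 : ℝ) / 2)) with hadef
  set F : ℝ → ℝ := fun m => ‖p‖ ^ 2 * m - c * (Real.sqrt (m * (m + 1)) - m) with hFdef
  show 0 ≤ polaronG a ∧
    (∀ m : ℝ, 0 ≤ m → F (polaronG a) ≤ F m) ∧
    (∀ m : ℝ, 0 ≤ m → F m = F (polaronG a) → m = polaronG a) ∧
    F (polaronG a) = -c * ((1 / 2) * (a ^ 4 + 1 - a ^ 2 * Real.sqrt (a ^ 4 + 2)))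
  have h4π : (0:ℝ) < 4 * Real.pi := by positivity
  have hden : 0 < (4 * Real.pi) ^ ((1:ℝ)/4) * φ ^ ((1:ℝ)/2) := by positivity
  have ha : 0 < a := div_pos hP hden
  have ha4 : a ^ 4 = ‖p‖ ^ 4 / (4 * Real.pi * φ ^ 2) := by
    rw [hadef, div_pow, mul_pow, ← Real.rpow_natCast ((4*Real.pi) ^ ((1:ℝ)/4)) 4,
        ← Real.rpow_natCast (φ ^ ((1:ℝ)/2)) 4, ← Real.rpow_mul h4π.le, ← Real.rpow_mul hφ.le]
    norm_num
  have hA : 0 < a ^ 4 := by positivity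
  have hc0 : 0 < c := by rw [hcdef]; positivity
  have hcA : c * a ^ 4 = ‖p‖ ^ 2 := by
    rw [hcdef, ha4]; field_simp
  set b : ℝ := a ^ 4 + 1 with hbdef
  have hb1 : 1 < b := by simp only [hbdef]; linarith
  set s : ℝ := Real.sqrt (a ^ 4 * (a ^ 4 + 2)) with hsdef
  have hs : 0 < s := Real.sqrt_pos.mpr (by positivity)
  have hs2 : s ^ 2 = a ^ 4 * (a ^ 4 + 2) := Real.sq_sqrt (by positivity)
  have hsb : s ^ 2 = b ^ 2 - 1 := by rw [hs2, hbdef]; ring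
  have hsltb : s < b := by nlinarith
  set M : ℝ := (b - s) / (2 * s) with hMdef
  have hG : polaronG a = M := by
    rw [polaronG, hMdef, ← hsdef, ← hbdef]
    field_simp
  have hM0 : 0 ≤ M := div_nonneg (by linarith) (by positivity)
  have hx0 : M * (M + 1) = (1 / (2 * s)) ^ 2 := by
    rw [hMdef]; field_simp; linear_combination (-1) * hsb
  have hfm : Real.sqrt (M * (M + 1)) = 1 / (2 * s) := by
    rw [hx0, Real.sqrt_sq (by positivity)]
  have hFeq : ∀ m : ℝ, F m = c * (b * m - Real.sqrt (m * (m + 1))) := by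
    intro m
    show ‖p‖ ^ 2 * m - c * (Real.sqrt (m * (m + 1)) - m) = _
    rw [← hcA, hbdef]; ring
  have htang : (b - s) / 2 + b * M = 1 / (2 * s) := by
    rw [hMdef]; field_simp; linear_combination (-1) * hsb
  have key : ∀ m : ℝ, 0 ≤ m → Real.sqrt (m * (m + 1)) ≤ (b - s) / 2 + b * m := by
    intro m hm
    have hR : 0 ≤ (b - s) / 2 + b * m :=
      add_nonneg (by linarith) (mul_nonneg (by linarith) hm)
    have hsq : m * (m + 1) ≤ ((b - s) / 2 + b * m) ^ 2 := by
      nlinarith [sq_nonneg (s * m - (b - s) / 2), hsb]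
    calc Real.sqrt (m * (m + 1)) ≤ Real.sqrt (((b - s) / 2 + b * m) ^ 2) :=
          Real.sqrt_le_sqrt hsq
      _ = (b - s) / 2 + b * m := Real.sqrt_sq hR
  refine ⟨hG ▸ hM0, ?_, ?_, ?_⟩
  · intro m hm
    rw [hG, hFeq m, hFeq M, hfm]
    have h1 : b * M - 1 / (2 * s) ≤ b * m - Real.sqrt (m * (m + 1)) := by
      have h2 := key m hm
      linarith
    exact mul_le_mul_of_nonneg_left h1 hc0.le
  · intro m hm heq
    rw [hG] at heq ⊢
    rw [hFeq m, hFeq M, hfm] at heq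
    have h1 : b * m - Real.sqrt (m * (m + 1)) = b * M - 1 / (2 * s) :=
      mul_left_cancel₀ hc0.ne' heq
    have h2 : Real.sqrt (m * (m + 1)) = (b - s) / 2 + b * m := by linarith
    have h3 : m * (m + 1) = ((b - s) / 2 + b * m) ^ 2 := by
      rw [← h2, Real.sq_sqrt (by positivity)]
    have h4 : (s * m - (b - s) / 2) ^ 2 = 0 := by nlinarith [hsb]
    have h5 : s * m = (b - s) / 2 := by nlinarith [sq_nonneg (s * m - (b - s) / 2)]
    rw [hMdef]
    field_simp
    linarith
  · rw [hG, hFeq M, hfm]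
    have hs' : s = a ^ 2 * Real.sqrt (a ^ 4 + 2) := by
      rw [hsdef, show a ^ 4 * (a ^ 4 + 2) = (a ^ 2) ^ 2 * (a ^ 4 + 2) by ring,
          Real.sqrt_mul (sq_nonneg _), Real.sqrt_sq (sq_nonneg a)]
    have h6 : b * M - 1 / (2 * s) = -((b - s) / 2) := by linarith
    rw [h6, ← hs', hbdef]
    ring
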